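/- Triangle inequality for the distortion distance: For normalized bounded Lorentzian metric measure spaces M, M', M'', LΔ₀(M, M'') ≤ LΔ₀(M, M') + LΔ₀(M', M''). -/

import Mathlib

open MeasureTheory

/-- The defining properties of a bounded Lorentzian metric space `(M, τ)` with
respect to a fixed topology on `M`: `τ` is nonnegative, satisfies the reverse
triangle inequality, is continuous, has compact superlevel sets, and
distinguishes points. -/
structure IsBLMS {M : Type*} [TopologicalSpace M] (tau : M → M → ℝ) : Prop where
  nonneg : ∀ x y, 0 ≤ tau x y
  rev_triangle : ∀ x y z, 0 < tau x y → 0 < tau y z → tau x y + tau y z ≤ tau x z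
  continuous : Continuous fun p : M × M => tau p.1 p.2
  compact_superlevel : ∀ ε : ℝ, 0 < ε → IsCompact {p : M × M | ε ≤ tau p.1 p.2}
  point_distinction : ∀ x y : M, x ≠ y → ∃ z, tau x z ≠ tau y z ∨ tau z x ≠ tau z y

/-- A coupling of two measures: a measure on the product whose marginals are the
given measures. -/
def IsCoupling {M M' : Type*} [MeasurableSpace M] [MeasurableSpace M']
    (π : MeasureTheory.Measure (M × M')) (m : MeasureTheory.Measure M)
    (m' : MeasureTheory.Measure M') : Prop :=
  π.map Prod.fst = m ∧ π.map Prod.snd = m'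

/-- The set of admissible distortion thresholds of a fixed coupling `π`:
`{ε > 0 : π⊗π(|τ(x,y) − τ'(x',y')| > ε) ≤ ε}`. -/
noncomputable def distortionThresholds {M M' : Type*} [MeasurableSpace M] [MeasurableSpace M']
    (tau : M → M → ℝ) (tau' : M' → M' → ℝ)
    (π : MeasureTheory.Measure (M × M')) : Set ℝ :=
  {ε : ℝ | 0 < ε ∧
    (π.prod π) {q : (M × M') × (M × M') |
      ε < |tau q.1.1 q.2.1 - tau' q.1.2 q.2.2|} ≤ ENNReal.ofReal ε}

/-- The (L⁰-)distortion distance `LΔ₀`: the infimum over all couplings `π` of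
`m` and `m'` of the infimum of the admissible distortion thresholds of `π`. -/
noncomputable def LDelta0 {M M' : Type*} [MeasurableSpace M] [MeasurableSpace M']
    (tau : M → M → ℝ) (tau' : M' → M' → ℝ)
    (m : MeasureTheory.Measure M) (m' : MeasureTheory.Measure M') : ℝ :=
  sInf {ε : ℝ | ∃ π : MeasureTheory.Measure (M × M'), IsCoupling π m m' ∧
    ε ∈ distortionThresholds tau tau' π}

open ProbabilityTheory

private lemma map_compProd_prod_left {α β γ : Type*} [MeasurableSpace α] [MeasurableSpace β]
    [MeasurableSpace γ] (μ : Measure α) [SFinite μ] (κ : Kernel α β) (η : Kernel α γ)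
    [IsMarkovKernel κ] [IsMarkovKernel η] :
    (μ ⊗ₘ (κ ×ₖ η)).map (fun p => (p.1, p.2.1)) = μ ⊗ₘ κ := by
  have hg : Measurable (fun p : α × (β × γ) => (p.1, p.2.1)) :=
    measurable_fst.prodMk (measurable_fst.comp measurable_snd)
  ext s hs
  rw [Measure.map_apply hg hs, Measure.compProd_apply (hg hs), Measure.compProd_apply hs]
  congr 1
  funext a
  have hA : MeasurableSet (Prod.mk a ⁻¹' s) := measurable_prodMk_left hs
  have : (Prod.mk a ⁻¹' ((fun p : α × (β × γ) => (p.1, p.2.1)) ⁻¹' s))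
      = Prod.fst ⁻¹' (Prod.mk a ⁻¹' s) := rfl
  rw [this, Kernel.prod_apply, ← Measure.fst_apply hA, Measure.fst_prod]

lemma map_compProd_prod_right {α β γ : Type*} [MeasurableSpace α] [MeasurableSpace β]
    [MeasurableSpace γ] (μ : Measure α) [SFinite μ] (κ : Kernel α β) (η : Kernel α γ)
    [IsMarkovKernel κ] [IsMarkovKernel η] :
    (μ ⊗ₘ (κ ×ₖ η)).map (fun p => (p.1, p.2.2)) = μ ⊗ₘ η := by
  have hg : Measurable (fun p : α × (β × γ) => (p.1, p.2.2)) :=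
    measurable_fst.prodMk (measurable_snd.comp measurable_snd)
  ext s hs
  rw [Measure.map_apply hg hs, Measure.compProd_apply (hg hs), Measure.compProd_apply hs]
  congr 1
  funext a
  have hA : MeasurableSet (Prod.mk a ⁻¹' s) := measurable_prodMk_left hs
  have : (Prod.mk a ⁻¹' ((fun p : α × (β × γ) => (p.1, p.2.2)) ⁻¹' s))
      = Prod.snd ⁻¹' (Prod.mk a ⁻¹' s) := rfl
  rw [this, Kernel.prod_apply, ← Measure.snd_apply hA, Measure.snd_prod]

lemma isProbabilityMeasure_of_coupling {M M' : Type*} [MeasurableSpace M] [MeasurableSpace M']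
    {π : Measure (M × M')} {m : Measure M} {m' : Measure M'} [IsProbabilityMeasure m]
    (h : IsCoupling π m m') : IsProbabilityMeasure π := by
  constructor
  have : π Set.univ = m Set.univ := by
    rw [← h.1, Measure.map_apply measurable_fst MeasurableSet.univ, Set.preimage_univ]
  exact this.trans measure_univ

lemma glue_lemma {M M' M'' : Type*}
    [TopologicalSpace M] [PolishSpace M] [MeasurableSpace M] [BorelSpace M]
    [TopologicalSpace M'] [PolishSpace M'] [MeasurableSpace M'] [BorelSpace M']
    [TopologicalSpace M''] [PolishSpace M''] [MeasurableSpace M''] [BorelSpace M'']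
    (tau : M → M → ℝ) (tau' : M' → M' → ℝ) (tau'' : M'' → M'' → ℝ)
    (ht : Continuous fun p : M × M => tau p.1 p.2)
    (ht' : Continuous fun p : M' × M' => tau' p.1 p.2)
    (ht'' : Continuous fun p : M'' × M'' => tau'' p.1 p.2)
    {m : Measure M} [IsProbabilityMeasure m]
    {m' : Measure M'} [IsProbabilityMeasure m']
    {m'' : Measure M''} [IsProbabilityMeasure m'']
    {π₁ : Measure (M × M')} {π₂ : Measure (M' × M'')}
    (h₁ : IsCoupling π₁ m m') (h₂ : IsCoupling π₂ m' m'')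
    {ε₁ ε₂ : ℝ}
    (hε₁ : ε₁ ∈ distortionThresholds tau tau' π₁)
    (hε₂ : ε₂ ∈ distortionThresholds tau' tau'' π₂) :
    ∃ π₃ : Measure (M × M''), IsCoupling π₃ m m'' ∧
      (ε₁ + ε₂) ∈ distortionThresholds tau tau'' π₃ := by
  have hneM : Nonempty M := by
    by_contra h
    rw [not_nonempty_iff] at h
    have := measure_univ (μ := m)
    rw [Set.univ_eq_empty_iff.mpr h, measure_empty] at this
    exact zero_ne_one this
  have hneM'' : Nonempty M'' := by
    by_contra h
    rw [not_nonempty_iff] at h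
    have := measure_univ (μ := m'')
    rw [Set.univ_eq_empty_iff.mpr h, measure_empty] at this
    exact zero_ne_one this
  haveI hπ₁ : IsProbabilityMeasure π₁ := isProbabilityMeasure_of_coupling h₁
  haveI hπ₂ : IsProbabilityMeasure π₂ := isProbabilityMeasure_of_coupling h₂
  -- disintegrate
  set ρ₁ : Measure (M' × M) := π₁.map Prod.swap with hρ₁def
  haveI hρ₁prob : IsProbabilityMeasure ρ₁ := Measure.isProbabilityMeasure_map measurable_swap.aemeasurable
  have hρ₁fst : ρ₁.fst = m' := by
    rw [hρ₁def, Measure.fst, Measure.map_map measurable_fst measurable_swap]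
    exact h₂.1 ▸ h₁.2
  have hπ₂fst : π₂.fst = m' := h₂.1
  set κ₁ : Kernel M' M := ρ₁.condKernel with hκ₁
  set κ₂ : Kernel M' M'' := π₂.condKernel with hκ₂
  have hd₁ : m' ⊗ₘ κ₁ = ρ₁ := by rw [hκ₁, ← hρ₁fst]; exact ρ₁.disintegrate _
  have hd₂ : m' ⊗ₘ κ₂ = π₂ := by rw [hκ₂, ← hπ₂fst]; exact π₂.disintegrate _
  set σ : Measure (M' × (M × M'')) := m' ⊗ₘ (κ₁ ×ₖ κ₂) with hσ
  have hσ₁ : σ.map (fun p => (p.1, p.2.1)) = ρ₁ := by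
    rw [hσ, map_compProd_prod_left, hd₁]
  have hσ₂ : σ.map (fun p => (p.1, p.2.2)) = π₂ := by
    rw [hσ, map_compProd_prod_right, hd₂]
  set π₃ : Measure (M × M'') := σ.map Prod.snd with hπ₃
  have hg1 : Measurable (fun p : M' × (M × M'') => (p.1, p.2.1)) :=
    measurable_fst.prodMk (measurable_fst.comp measurable_snd)
  have hg2 : Measurable (fun p : M' × (M × M'') => (p.1, p.2.2)) :=
    measurable_fst.prodMk (measurable_snd.comp measurable_snd)
  refine ⟨π₃, ⟨?_, ?_⟩, ?_⟩
  · -- first marginal = m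
    rw [hπ₃, Measure.map_map measurable_fst measurable_snd]
    have : (Prod.fst ∘ Prod.snd : M' × (M × M'') → M)
        = Prod.snd ∘ (fun p : M' × (M × M'') => (p.1, p.2.1)) := rfl
    rw [this, ← Measure.map_map measurable_snd hg1, hσ₁, hρ₁def,
      Measure.map_map measurable_snd measurable_swap]
    exact h₁.1
  · -- second marginal = m''
    rw [hπ₃, Measure.map_map measurable_snd measurable_snd]
    have : (Prod.snd ∘ Prod.snd : M' × (M × M'') → M'')
        = Prod.snd ∘ (fun p : M' × (M × M'') => (p.1, p.2.2)) := rfl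
    rw [this, ← Measure.map_map measurable_snd hg2, hσ₂]
    exact h₂.2
  · -- threshold
    refine ⟨add_pos hε₁.1 hε₂.1, ?_⟩
    have hf : Measurable fun q : (M × M'') × (M × M'') =>
        tau q.1.1 q.2.1 - tau'' q.1.2 q.2.2 := by
      have h1 : Measurable fun q : (M × M'') × (M × M'') => tau q.1.1 q.2.1 :=
        ht.measurable.comp ((measurable_fst.comp measurable_fst).prodMk
          (measurable_fst.comp measurable_snd))
      have h2 : Measurable fun q : (M × M'') × (M × M'') => tau'' q.1.2 q.2.2 :=
        ht''.measurable.comp ((measurable_snd.comp measurable_fst).prodMk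
          (measurable_snd.comp measurable_snd))
      exact h1.sub h2
    have hS : MeasurableSet {q : (M × M'') × (M × M'') |
        ε₁ + ε₂ < |tau q.1.1 q.2.1 - tau'' q.1.2 q.2.2|} :=
      measurableSet_lt measurable_const hf.abs
    have hf1 : Measurable fun q : (M × M') × (M × M') =>
        tau q.1.1 q.2.1 - tau' q.1.2 q.2.2 := by
      have h1 : Measurable fun q : (M × M') × (M × M') => tau q.1.1 q.2.1 :=
        ht.measurable.comp ((measurable_fst.comp measurable_fst).prodMk
          (measurable_fst.comp measurable_snd))
      have h2 : Measurable fun q : (M × M') × (M × M') => tau' q.1.2 q.2.2 :=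
        ht'.measurable.comp ((measurable_snd.comp measurable_fst).prodMk
          (measurable_snd.comp measurable_snd))
      exact h1.sub h2
    have hS1 : MeasurableSet {q : (M × M') × (M × M') |
        ε₁ < |tau q.1.1 q.2.1 - tau' q.1.2 q.2.2|} :=
      measurableSet_lt measurable_const hf1.abs
    have hf2 : Measurable fun q : (M' × M'') × (M' × M'') =>
        tau' q.1.1 q.2.1 - tau'' q.1.2 q.2.2 := by
      have h1 : Measurable fun q : (M' × M'') × (M' × M'') => tau' q.1.1 q.2.1 :=
        ht'.measurable.comp ((measurable_fst.comp measurable_fst).prodMk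
          (measurable_fst.comp measurable_snd))
      have h2 : Measurable fun q : (M' × M'') × (M' × M'') => tau'' q.1.2 q.2.2 :=
        ht''.measurable.comp ((measurable_snd.comp measurable_fst).prodMk
          (measurable_snd.comp measurable_snd))
      exact h1.sub h2
    have hS2 : MeasurableSet {q : (M' × M'') × (M' × M'') |
        ε₂ < |tau' q.1.1 q.2.1 - tau'' q.1.2 q.2.2|} :=
      measurableSet_lt measurable_const hf2.abs
    -- express π₃.prod π₃ as pushforward of σ.prod σ
    have hσprob : IsProbabilityMeasure σ := by
      rw [hσ]; infer_instance
    have hmap3 : π₃.prod π₃ = (σ.prod σ).map (Prod.map Prod.snd Prod.snd) := by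
      rw [hπ₃, Measure.map_prod_map _ _ measurable_snd measurable_snd]
    -- the swap map from M'×M to M×M'
    set w : M' × (M × M'') → M × M' := fun p => (p.2.1, p.1) with hw
    have hwmeas : Measurable w := (measurable_fst.comp measurable_snd).prodMk measurable_fst
    have hσw : σ.map w = π₁ := by
      have : w = Prod.swap ∘ (fun p : M' × (M × M'') => (p.1, p.2.1)) := rfl
      rw [this, ← Measure.map_map measurable_swap hg1, hσ₁, hρ₁def,
        Measure.map_map measurable_swap measurable_swap]
      simp
    have hmap1 : π₁.prod π₁ = (σ.prod σ).map (Prod.map w w) := by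
      rw [← hσw, Measure.map_prod_map _ _ hwmeas hwmeas]
    have hmap2 : π₂.prod π₂ = (σ.prod σ).map (Prod.map (fun p : M' × (M × M'') => (p.1, p.2.2))
        (fun p => (p.1, p.2.2))) := by
      rw [← hσ₂, Measure.map_prod_map _ _ hg2 hg2]
    -- inclusion of bad sets
    rw [hmap3, Measure.map_apply (measurable_snd.prodMap measurable_snd) hS]
    have hsub : (Prod.map (Prod.snd : M' × (M × M'') → M × M'') Prod.snd) ⁻¹'
          {q : (M × M'') × (M × M'') | ε₁ + ε₂ < |tau q.1.1 q.2.1 - tau'' q.1.2 q.2.2|}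
        ⊆ ((Prod.map w w) ⁻¹'
            {q : (M × M') × (M × M') | ε₁ < |tau q.1.1 q.2.1 - tau' q.1.2 q.2.2|})
          ∪ ((Prod.map (fun p : M' × (M × M'') => (p.1, p.2.2)) (fun p => (p.1, p.2.2))) ⁻¹'
            {q : (M' × M'') × (M' × M'') | ε₂ < |tau' q.1.1 q.2.1 - tau'' q.1.2 q.2.2|}) := by
      rintro ⟨⟨x', x, x''⟩, ⟨y', y, y''⟩⟩ hq
      simp only [Set.mem_preimage, Set.mem_setOf_eq, Prod.map, Set.mem_union] at hq ⊢
      by_contra hc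
      push_neg at hc
      obtain ⟨hc1, hc2⟩ := hc
      have := abs_sub_abs_le_abs_sub (tau x y) (tau'' x'' y'')
      have habs : |tau x y - tau'' x'' y''| ≤
          |tau x y - tau' x' y'| + |tau' x' y' - tau'' x'' y''| := abs_sub_le _ _ _
      have : |tau x y - tau'' x'' y''| ≤ ε₁ + ε₂ :=
        habs.trans (add_le_add hc1 hc2)
      exact absurd hq (not_lt.mpr this)
    calc (σ.prod σ) ((Prod.map (Prod.snd : M' × (M × M'') → M × M'') Prod.snd) ⁻¹'
          {q : (M × M'') × (M × M'') | ε₁ + ε₂ < |tau q.1.1 q.2.1 - tau'' q.1.2 q.2.2|})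
        ≤ (σ.prod σ) (((Prod.map w w) ⁻¹'
            {q : (M × M') × (M × M') | ε₁ < |tau q.1.1 q.2.1 - tau' q.1.2 q.2.2|})
          ∪ ((Prod.map (fun p : M' × (M × M'') => (p.1, p.2.2)) (fun p => (p.1, p.2.2))) ⁻¹'
            {q : (M' × M'') × (M' × M'') | ε₂ < |tau' q.1.1 q.2.1 - tau'' q.1.2 q.2.2|})) :=
          measure_mono hsub
      _ ≤ (σ.prod σ) ((Prod.map w w) ⁻¹'
            {q : (M × M') × (M × M') | ε₁ < |tau q.1.1 q.2.1 - tau' q.1.2 q.2.2|})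
          + (σ.prod σ) ((Prod.map (fun p : M' × (M × M'') => (p.1, p.2.2)) (fun p => (p.1, p.2.2))) ⁻¹'
            {q : (M' × M'') × (M' × M'') | ε₂ < |tau' q.1.1 q.2.1 - tau'' q.1.2 q.2.2|}) :=
          measure_union_le _ _
      _ ≤ ENNReal.ofReal ε₁ + ENNReal.ofReal ε₂ := by
          gcongr
          · rw [← Measure.map_apply (hwmeas.prodMap hwmeas) hS1, ← hmap1]
            exact hε₁.2
          · rw [← Measure.map_apply (hg2.prodMap hg2) hS2, ← hmap2]
            exact hε₂.2
      _ = ENNReal.ofReal (ε₁ + ε₂) := (ENNReal.ofReal_add hε₁.1.le hε₂.1.le).symm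

/-- Triangle inequality for the distortion distance:
LΔ₀(M, M'') ≤ LΔ₀(M, M') + LΔ₀(M', M''). -/
theorem LDelta0_triangle
    {M M' M'' : Type*}
    [TopologicalSpace M] [PolishSpace M] [MeasurableSpace M] [BorelSpace M]
    [TopologicalSpace M'] [PolishSpace M'] [MeasurableSpace M'] [BorelSpace M']
    [TopologicalSpace M''] [PolishSpace M''] [MeasurableSpace M''] [BorelSpace M'']
    (tau : M → M → ℝ) (tau' : M' → M' → ℝ) (tau'' : M'' → M'' → ℝ)
    (htau : IsBLMS tau) (htau' : IsBLMS tau') (htau'' : IsBLMS tau'')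
    (m : Measure M) [IsProbabilityMeasure m]
    (m' : Measure M') [IsProbabilityMeasure m']
    (m'' : Measure M'') [IsProbabilityMeasure m''] :
    LDelta0 tau tau'' m m'' ≤ LDelta0 tau tau' m m' + LDelta0 tau' tau'' m' m'' := by
  classical
  set A := {ε : ℝ | ∃ π : Measure (M × M'), IsCoupling π m m' ∧
    ε ∈ distortionThresholds tau tau' π} with hA
  set B := {ε : ℝ | ∃ π : Measure (M' × M''), IsCoupling π m' m'' ∧
    ε ∈ distortionThresholds tau' tau'' π} with hB
  set C := {ε : ℝ | ∃ π : Measure (M × M''), IsCoupling π m m'' ∧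
    ε ∈ distortionThresholds tau tau'' π} with hC
  have hCbdd : BddBelow C := by
    refine ⟨0, fun x hx => ?_⟩
    obtain ⟨π, _, hx0, _⟩ := hx
    exact hx0.le
  have hAne : A.Nonempty := by
    refine ⟨1, m.prod m', ⟨Measure.fst_prod, Measure.snd_prod⟩, one_pos, ?_⟩
    rw [ENNReal.ofReal_one]
    exact prob_le_one
  have hBne : B.Nonempty := by
    refine ⟨1, m'.prod m'', ⟨Measure.fst_prod, Measure.snd_prod⟩, one_pos, ?_⟩
    rw [ENNReal.ofReal_one]
    exact prob_le_one
  have key : ∀ a ∈ A, ∀ b ∈ B, sInf C ≤ a + b := by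
    intro a ha b hb
    obtain ⟨π₁, hπ₁, ha'⟩ := ha
    obtain ⟨π₂, hπ₂, hb'⟩ := hb
    obtain ⟨π₃, hπ₃, hab⟩ := glue_lemma tau tau' tau'' htau.continuous htau'.continuous
      htau''.continuous hπ₁ hπ₂ ha' hb'
    exact csInf_le hCbdd ⟨π₃, hπ₃, hab⟩
  show sInf C ≤ sInf A + sInf B
  rw [← sub_le_iff_le_add]
  refine le_csInf hAne fun a ha => ?_
  rw [sub_le_comm]
  refine le_csInf hBne fun b hb => ?_
  rw [sub_le_iff_le_add']
  exact key a ha b hb
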